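/- Let X be a Hilbert space with dual X', and let A : X → X' be a bounded linear operator. Suppose there exist a compact linear operator T : X → X' and a constant α > 0 such that ⟨(A+T)x, x⟩ ≥ α‖x‖² for all x ∈ X, and suppose ⟨Ax, x⟩ > 0 for all x ∈ X \ {0}. Then there exists a constant α₁ > 0 such that ⟨Ax, x⟩ ≥ α₁‖x‖² for all x ∈ X. -/

import Mathlib

set_option maxHeartbeats 1000000


open NormedSpace Filter Topology

/-- If a bounded operator `A` from a Hilbert space into its dual is coercive up to a
compact perturbation `T` and strictly positive, then it is coercive. -/
theorem stmt0 {X : Type*} [NormedAddCommGroup X] [InnerProductSpace ℝ X] [CompleteSpace X]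
    (A T : X →L[ℝ] StrongDual ℝ X) (hT : IsCompactOperator (⇑T))
    (α : ℝ) (hα : 0 < α)
    (hcoer : ∀ x : X, α * ‖x‖ ^ 2 ≤ (A + T) x x)
    (hpos : ∀ x : X, x ≠ 0 → 0 < A x x) :
    ∃ α₁ : ℝ, 0 < α₁ ∧ ∀ x : X, α₁ * ‖x‖ ^ 2 ≤ A x x := by
  by_contra hcon
  push_neg at hcon
  have hnn : ∀ x : X, 0 ≤ A x x := by
    intro x
    rcases eq_or_ne x 0 with rfl | hx
    · simp
    · exact (hpos x hx).le
  -- the symmetrized operator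
  set S : X →L[ℝ] StrongDual ℝ X := (2⁻¹ : ℝ) • (A + ContinuousLinearMap.flip A) with hSdef
  have hSapp : ∀ x y : X, S x y = 2⁻¹ * (A x y + A y x) := by
    intro x y
    simp only [hSdef, ContinuousLinearMap.smul_apply, ContinuousLinearMap.add_apply,
      ContinuousLinearMap.flip_apply, smul_eq_mul]
    try ring
  have hSsymm : ∀ x y : X, S x y = S y x := by
    intro x y; rw [hSapp, hSapp]; ring
  have hSxx : ∀ x : X, S x x = A x x := by
    intro x; rw [hSapp]; ring
  -- Cauchy–Schwarz for the positive semidefinite symmetric form S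
  have hCS : ∀ x y : X, (S x y) ^ 2 ≤ S x x * S y y := by
    intro x y
    have hq : ∀ t : ℝ, 0 ≤ S y y * (t * t) + (2 * S x y) * t + S x x := by
      intro t
      have h0 : 0 ≤ S (x + t • y) (x + t • y) := by rw [hSxx]; exact hnn _
      have hexp : S (x + t • y) (x + t • y)
          = S y y * (t * t) + (2 * S x y) * t + S x x := by
        have h1 : S (x + t • y) = S x + t • S y := by
          rw [map_add, map_smul]
        rw [h1]
        simp only [ContinuousLinearMap.add_apply, ContinuousLinearMap.smul_apply,
          map_add, map_smul, smul_eq_mul]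
        rw [hSsymm y x]
        ring
      linarith [hexp ▸ h0]
    have := discrim_le_zero hq
    rw [discrim] at this
    nlinarith [this]
  -- hence a norm bound on S x
  have hSnorm : ∀ x : X, ‖S x‖ ≤ Real.sqrt (‖S‖ * A x x) := by
    intro x
    apply ContinuousLinearMap.opNorm_le_bound _ (Real.sqrt_nonneg _)
    intro y
    have h1 : (S x y) ^ 2 ≤ (‖S‖ * A x x) * ‖y‖ ^ 2 := by
      have h2 : S y y ≤ ‖S‖ * ‖y‖ * ‖y‖ := by
        calc S y y ≤ ‖S y y‖ := le_abs_self _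
        _ ≤ ‖S y‖ * ‖y‖ := (S y).le_opNorm y
        _ ≤ (‖S‖ * ‖y‖) * ‖y‖ := by
            gcongr
            exact S.le_opNorm y
      have h3 := hCS x y
      rw [hSxx] at h3
      calc (S x y) ^ 2 ≤ A x x * S y y := h3
        _ ≤ A x x * (‖S‖ * ‖y‖ * ‖y‖) := mul_le_mul_of_nonneg_left h2 (hnn x)
        _ = (‖S‖ * A x x) * ‖y‖ ^ 2 := by ring
    have h4 : |S x y| ≤ Real.sqrt ((‖S‖ * A x x) * ‖y‖ ^ 2) := Real.abs_le_sqrt h1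
    calc ‖S x y‖ = |S x y| := rfl
      _ ≤ Real.sqrt ((‖S‖ * A x x) * ‖y‖ ^ 2) := h4
      _ = Real.sqrt (‖S‖ * A x x) * ‖y‖ := by
          rw [Real.sqrt_mul' _ (by positivity), Real.sqrt_sq (norm_nonneg y)]
  -- a minimizing sequence of unit vectors
  have hseq : ∀ n : ℕ, ∃ u : X, ‖u‖ = 1 ∧ A u u < 1 / (n + 1) := by
    intro n
    obtain ⟨x, hx⟩ := hcon (1 / (n + 1)) (by positivity)
    have hx0 : x ≠ 0 := by
      rintro rfl
      simp at hx
    have hxn : (0 : ℝ) < ‖x‖ := norm_pos_iff.mpr hx0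
    refine ⟨‖x‖⁻¹ • x, ?_, ?_⟩
    · rw [norm_smul, norm_inv, norm_norm, inv_mul_cancel₀ hxn.ne']
    · have : A (‖x‖⁻¹ • x) (‖x‖⁻¹ • x) = ‖x‖⁻¹ * (‖x‖⁻¹ * A x x) := by
        rw [map_smul]; simp
      rw [this]
      have : ‖x‖⁻¹ * (‖x‖⁻¹ * A x x) < ‖x‖⁻¹ * (‖x‖⁻¹ * (1 / (n + 1) * ‖x‖ ^ 2)) := by
        gcongr
      calc ‖x‖⁻¹ * (‖x‖⁻¹ * A x x)
          < ‖x‖⁻¹ * (‖x‖⁻¹ * (1 / (n + 1) * ‖x‖ ^ 2)) := this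
        _ = 1 / (n + 1) := by field_simp
  choose u hu1 hu2 using hseq
  have hAu0 : Tendsto (fun n => A (u n) (u n)) atTop (𝓝 0) := by
    refine squeeze_zero (fun n => hnn _) (fun n => (hu2 n).le) ?_
    exact_mod_cast tendsto_one_div_add_atTop_nhds_zero_nat (𝕜 := ℝ)
  have hSu0 : Tendsto (fun n => S (u n)) atTop (𝓝 0) := by
    refine squeeze_zero_norm (fun n => hSnorm (u n)) ?_
    have h1 : Tendsto (fun n => ‖S‖ * A (u n) (u n)) atTop (𝓝 0) := by
      simpa using hAu0.const_mul ‖S‖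
    have h2 := (Real.continuous_sqrt.tendsto 0).comp h1
    simpa only [Real.sqrt_zero, Function.comp_def] using h2
  -- compactness of T: extract a convergent subsequence of T (u n)
  have hmem : ∀ n, T (u n) ∈ closure (T '' Metric.closedBall (0 : X) 1) := by
    intro n
    exact subset_closure (Set.mem_image_of_mem _ (by
      rw [Metric.mem_closedBall, dist_zero_right, hu1]))
  obtain ⟨f, -, φ, hφ, hTf⟩ :=
    (hT.isCompact_closure_image_of_bounded Metric.isBounded_closedBall).tendsto_subseq hmem
  -- Lax–Milgram: S + T is coercive, hence invertible
  have hMcoer : IsCoercive (S + T : X →L[ℝ] X →L[ℝ] ℝ) := by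
    refine ⟨α, hα, fun x => ?_⟩
    have h1 : (S + T : X →L[ℝ] X →L[ℝ] ℝ) x x = (A + T) x x := by
      simp only [ContinuousLinearMap.add_apply]
      rw [hSxx]
    calc α * ‖x‖ * ‖x‖ = α * ‖x‖ ^ 2 := by ring
      _ ≤ (A + T) x x := hcoer x
      _ = (S + T : X →L[ℝ] X →L[ℝ] ℝ) x x := h1.symm
  set E := hMcoer.continuousLinearEquivOfBilin with hE
  have hEv : ∀ v : X, (InnerProductSpace.toDual ℝ X).symm ((S + T) v) = E v := by
    intro v
    have h1 : (InnerProductSpace.toDual ℝ X) (E v) = (S + T) v := by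
      ext w
      rw [InnerProductSpace.toDual_apply_apply]
      exact hMcoer.continuousLinearEquivOfBilin_apply v w
    rw [← h1, LinearIsometryEquiv.symm_apply_apply]
  have hurep : ∀ n : ℕ, u n
      = E.symm ((InnerProductSpace.toDual ℝ X).symm (S (u n) + T (u n))) := by
    intro n
    have := hEv (u n)
    rw [ContinuousLinearMap.add_apply] at this
    rw [this, ContinuousLinearEquiv.symm_apply_apply]
  -- the subsequence of u converges strongly
  have hsum : Tendsto (fun n => S (u (φ n)) + T (u (φ n))) atTop (𝓝 (0 + f)) :=
    ((hSu0.comp hφ.tendsto_atTop).add hTf)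
  rw [zero_add] at hsum
  set w : X := E.symm ((InnerProductSpace.toDual ℝ X).symm f) with hw
  have huφ : Tendsto (fun n => u (φ n)) atTop (𝓝 w) := by
    have hc : Continuous fun g : StrongDual ℝ X =>
        E.symm ((InnerProductSpace.toDual ℝ X).symm g) :=
      E.symm.continuous.comp (InnerProductSpace.toDual ℝ X).symm.continuous
    exact ((hc.tendsto f).comp hsum).congr fun n => (hurep (φ n)).symm
  -- properties of the limit
  have hwn : ‖w‖ = 1 := by
    have := (continuous_norm.tendsto w).comp huφ
    have h1 : Tendsto (fun n => ‖u (φ n)‖) atTop (𝓝 1) := by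
      simp only [hu1]
      exact tendsto_const_nhds
    exact tendsto_nhds_unique this h1
  have hw0 : w ≠ 0 := by
    intro h
    rw [h, norm_zero] at hwn
    exact one_ne_zero hwn.symm
  have hSw : S w = 0 := by
    have h1 : Tendsto (fun n => S (u (φ n))) atTop (𝓝 (S w)) :=
      (S.continuous.tendsto w).comp huφ
    exact tendsto_nhds_unique h1 (hSu0.comp hφ.tendsto_atTop)
  have : A w w = 0 := by
    rw [← hSxx, hSw]
    rfl
  exact absurd (hpos w hw0) (by rw [this]; exact lt_irrefl 0)
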